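/- Let σ, r, b ∈ ℝ and let x = (x₁, x₂, x₃) : I → ℝ³ be a C¹ solution of the Lorenz system x₁′ = −σx₁ + σx₂, x₂′ = −x₁x₃ + rx₁ − x₂, x₃′ = x₁x₂ − bx₃. Then x is C² and satisfies the Lorenz geometric dynamics: x₁″ = ∂f/∂x₁ + (σ + x₃ − r) x₂′ − x₂ x₃′, x₂″ = ∂f/∂x₂ + (r − x₃ − σ) x₁′ − 2x₁ x₃′, x₃″ = ∂f/∂x₃ + x₂ x₁′ + 2x₁ x₂′, where f(x₁,x₂,x₃) = ½[(−σx₁ + σx₂)² + (−x₁x₃ + rx₁ − x₂)² + (x₁x₂ − bx₃)²], all evaluated along x(t). -/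

import Mathlib

set_option linter.unreachableTactic false
set_option linter.unusedTactic false

lemma quadDeriv (A B C D E F u : ℝ) :
    HasDerivAt (fun u : ℝ => (1/2) * ((A*u+B)^2 + (C*u+D)^2 + (E*u+F)^2))
      ((A*u+B)*A + (C*u+D)*C + (E*u+F)*E) u := by
  have h1 : HasDerivAt (fun u : ℝ => A*u+B) A u := by
    simpa using ((hasDerivAt_id u).const_mul A).add_const B
  have h2 : HasDerivAt (fun u : ℝ => C*u+D) C u := by
    simpa using ((hasDerivAt_id u).const_mul C).add_const D
  have h3 : HasDerivAt (fun u : ℝ => E*u+F) E u := by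
    simpa using ((hasDerivAt_id u).const_mul E).add_const F
  have := (((h1.pow 2).add (h2.pow 2)).add (h3.pow 2)).const_mul (1/2)
  refine this.congr_deriv ?_
  push_cast
  ring

/-- Every C¹ solution of the Lorenz system
`x₁' = -σx₁ + σx₂`, `x₂' = -x₁x₃ + rx₁ - x₂`, `x₃' = x₁x₂ - bx₃` is C² and satisfies
the Lorenz geometric dynamics
`x₁'' = ∂f/∂x₁ + (σ + x₃ - r) x₂' - x₂ x₃'`,
`x₂'' = ∂f/∂x₂ + (r - x₃ - σ) x₁' - 2x₁ x₃'`,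
`x₃'' = ∂f/∂x₃ + x₂ x₁' + 2x₁ x₂'`,
where `f = ½[(-σx₁+σx₂)² + (-x₁x₃+rx₁-x₂)² + (x₁x₂-bx₃)²]` is the energy. -/
theorem lorenz_solution_geometric_dynamics (σ r b : ℝ)
    (f : ℝ → ℝ → ℝ → ℝ)
    (hf : ∀ u v w : ℝ, f u v w =
      (1 / 2) * ((-σ * u + σ * v) ^ 2 + (-u * w + r * u - v) ^ 2 + (u * v - b * w) ^ 2))
    (a c : ℝ) (x₁ x₂ x₃ : ℝ → ℝ)
    (h₁ : ∀ t ∈ Set.Ioo a c, HasDerivAt x₁ (-σ * x₁ t + σ * x₂ t) t)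
    (h₂ : ∀ t ∈ Set.Ioo a c, HasDerivAt x₂ (-x₁ t * x₃ t + r * x₁ t - x₂ t) t)
    (h₃ : ∀ t ∈ Set.Ioo a c, HasDerivAt x₃ (x₁ t * x₂ t - b * x₃ t) t) :
    ∀ t ∈ Set.Ioo a c,
      HasDerivAt (deriv x₁)
        (deriv (fun u => f u (x₂ t) (x₃ t)) (x₁ t)
          + (σ + x₃ t - r) * deriv x₂ t - x₂ t * deriv x₃ t) t ∧
      HasDerivAt (deriv x₂)
        (deriv (fun v => f (x₁ t) v (x₃ t)) (x₂ t)
          + (r - x₃ t - σ) * deriv x₁ t - 2 * x₁ t * deriv x₃ t) t ∧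
      HasDerivAt (deriv x₃)
        (deriv (fun w => f (x₁ t) (x₂ t) w) (x₃ t)
          + x₂ t * deriv x₁ t + 2 * x₁ t * deriv x₂ t) t := by
  intro t ht
  have hI : Set.Ioo a c ∈ nhds t := Ioo_mem_nhds ht.1 ht.2
  have H1 := h₁ t ht
  have H2 := h₂ t ht
  have H3 := h₃ t ht
  have d1 : deriv x₁ t = -σ * x₁ t + σ * x₂ t := H1.deriv
  have d2 : deriv x₂ t = -x₁ t * x₃ t + r * x₁ t - x₂ t := H2.deriv
  have d3 : deriv x₃ t = x₁ t * x₂ t - b * x₃ t := H3.deriv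
  have e₁ : deriv x₁ =ᶠ[nhds t] fun s => -σ * x₁ s + σ * x₂ s :=
    Filter.eventually_of_mem hI fun s hs => (h₁ s hs).deriv
  have e₂ : deriv x₂ =ᶠ[nhds t] fun s => -x₁ s * x₃ s + r * x₁ s - x₂ s :=
    Filter.eventually_of_mem hI fun s hs => (h₂ s hs).deriv
  have e₃ : deriv x₃ =ᶠ[nhds t] fun s => x₁ s * x₂ s - b * x₃ s :=
    Filter.eventually_of_mem hI fun s hs => (h₃ s hs).deriv
  -- second derivatives
  have G1 : HasDerivAt (fun s => -σ * x₁ s + σ * x₂ s)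
      (-σ * (-σ * x₁ t + σ * x₂ t) + σ * (-x₁ t * x₃ t + r * x₁ t - x₂ t)) t :=
    (H1.const_mul (-σ)).add (H2.const_mul σ)
  have G2 : HasDerivAt (fun s => -x₁ s * x₃ s + r * x₁ s - x₂ s)
      ((-(-σ * x₁ t + σ * x₂ t)) * x₃ t + (-x₁ t) * (x₁ t * x₂ t - b * x₃ t)
        + r * (-σ * x₁ t + σ * x₂ t) - (-x₁ t * x₃ t + r * x₁ t - x₂ t)) t := by
    have := ((H1.neg.mul H3).add (H1.const_mul r)).sub H2
    refine this.congr_deriv ?_; simp only [Pi.neg_apply]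
  have G3 : HasDerivAt (fun s => x₁ s * x₂ s - b * x₃ s)
      ((-σ * x₁ t + σ * x₂ t) * x₂ t + x₁ t * (-x₁ t * x₃ t + r * x₁ t - x₂ t)
        - b * (x₁ t * x₂ t - b * x₃ t)) t :=
    (H1.mul H2).sub (H3.const_mul b)
  have D1 : HasDerivAt (deriv x₁)
      (-σ * (-σ * x₁ t + σ * x₂ t) + σ * (-x₁ t * x₃ t + r * x₁ t - x₂ t)) t :=
    G1.congr_of_eventuallyEq e₁
  have D2 := G2.congr_of_eventuallyEq e₂
  have D3 := G3.congr_of_eventuallyEq e₃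
  -- partial derivatives of f
  have df₁ : deriv (fun u => f u (x₂ t) (x₃ t)) (x₁ t)
      = ((-σ)*(x₁ t)+σ*(x₂ t))*(-σ) + ((-(x₃ t)+r)*(x₁ t)+(-(x₂ t)))*(-(x₃ t)+r)
        + ((x₂ t)*(x₁ t)+(-(b*(x₃ t))))*(x₂ t) := by
    have heq : (fun u => f u (x₂ t) (x₃ t))
        = fun u => (1/2) * (((-σ)*u+σ*(x₂ t))^2 + ((-(x₃ t)+r)*u+(-(x₂ t)))^2
            + ((x₂ t)*u+(-(b*(x₃ t))))^2) :=
      funext fun u => by rw [hf]; ring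
    rw [heq, (quadDeriv _ _ _ _ _ _ _).deriv]
  have df₂ : deriv (fun v => f (x₁ t) v (x₃ t)) (x₂ t)
      = (σ*(x₂ t)+(-σ*(x₁ t)))*σ + ((-1)*(x₂ t)+(-(x₁ t)*(x₃ t)+r*(x₁ t)))*(-1)
        + ((x₁ t)*(x₂ t)+(-(b*(x₃ t))))*(x₁ t) := by
    have heq : (fun v => f (x₁ t) v (x₃ t))
        = fun v => (1/2) * ((σ*v+(-σ*(x₁ t)))^2 + ((-1)*v+(-(x₁ t)*(x₃ t)+r*(x₁ t)))^2
            + ((x₁ t)*v+(-(b*(x₃ t))))^2) :=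
      funext fun v => by rw [hf]; ring
    rw [heq, (quadDeriv _ _ _ _ _ _ _).deriv]
  have df₃ : deriv (fun w => f (x₁ t) (x₂ t) w) (x₃ t)
      = (0*(x₃ t)+(-σ*(x₁ t)+σ*(x₂ t)))*0 + ((-(x₁ t))*(x₃ t)+(r*(x₁ t)-(x₂ t)))*(-(x₁ t))
        + ((-b)*(x₃ t)+((x₁ t)*(x₂ t)))*(-b) := by
    have heq : (fun w => f (x₁ t) (x₂ t) w)
        = fun w => (1/2) * ((0*w+(-σ*(x₁ t)+σ*(x₂ t)))^2 + ((-(x₁ t))*w+(r*(x₁ t)-(x₂ t)))^2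
            + ((-b)*w+((x₁ t)*(x₂ t)))^2) :=
      funext fun w => by rw [hf]; ring
    rw [heq, (quadDeriv _ _ _ _ _ _ _).deriv]
  refine ⟨?_, ?_, ?_⟩
  · convert D1 using 1
    rw [df₁, d2, d3]; ring
  · refine D2.congr_deriv ?_
    rw [df₂, d1, d3]; ring
  · refine D3.congr_deriv ?_
    rw [df₃, d1, d2]; ring
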